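/- The south pole and the origin are asymptotically reachable in the auxiliary planar system: if γ > 0, then (0,−1) ∈ cl A₊(0,1) and (0,0) ∈ cl A₊(0,1). -/

import Mathlib

open MeasureTheory Set Filter

noncomputable section

def velA (ω γ : ℝ) (θ : ℝ → ℝ) (c : ℝ → ℝ × ℝ) (t : ℝ) : ℝ × ℝ :=
  (-(γ / 2) * (c t).1 - ω * (c t).2 * Real.cos (θ t),
   ω * (c t).1 * Real.cos (θ t) - (γ / 4) * (c t).2 * (3 - Real.cos (2 * θ t))
     + γ * Real.sin (θ t))

def reachA (ω γ : ℝ) (p : ℝ × ℝ) : Set (ℝ × ℝ) :=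
  {q | ∃ (T : ℝ) (θ : ℝ → ℝ) (c : ℝ → ℝ × ℝ), 0 ≤ T ∧ Measurable θ ∧
    IntervalIntegrable (velA ω γ θ c) volume 0 T ∧
    (∀ t ∈ Icc 0 T, c t = p + ∫ s in (0:ℝ)..t, velA ω γ θ c s) ∧
    c T = q}

lemma mem_reach_of_deriv (ω γ : ℝ) (θ0 : ℝ) (c : ℝ → ℝ × ℝ) (hc0 : c 0 = (0,1))
    (hc : ∀ t, HasDerivAt c (velA ω γ (fun _ => θ0) c t) t)
    (hcont : Continuous (velA ω γ (fun _ => θ0) c))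
    (T : ℝ) (hT : 0 ≤ T) : c T ∈ reachA ω γ (0,1) := by
  refine ⟨T, fun _ => θ0, c, hT, measurable_const, hcont.intervalIntegrable 0 T, ?_, rfl⟩
  intro t _
  rw [intervalIntegral.integral_eq_sub_of_hasDerivAt (fun s _ => hc s)
    (hcont.intervalIntegrable 0 t), hc0]
  abel

/-- The south pole `(0,−1)` and the origin `(0,0)` are asymptotically reachable from `(0,1)`
in the auxiliary planar control system. -/
theorem south_pole_origin_asymptotically_reachable (ω γ : ℝ) (hω : 0 < ω) (hγ : 0 < γ) :
    ((0:ℝ), (-1:ℝ)) ∈ closure (reachA ω γ (0, 1)) ∧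
      ((0:ℝ), (0:ℝ)) ∈ closure (reachA ω γ (0, 1)) := by
  constructor
  · -- c t = (0, -1 + 2 exp(-γ t)), θ = -π/2
    set c : ℝ → ℝ × ℝ := fun t => ((0:ℝ), -1 + 2 * Real.exp (-γ * t)) with hcdef
    have hc : ∀ t, HasDerivAt c (velA ω γ (fun _ => -(Real.pi/2)) c t) t := by
      intro t
      have h2 : HasDerivAt (fun t => -1 + 2 * Real.exp (-γ * t))
          (2 * (Real.exp (-γ * t) * (-γ))) t := by
        simpa using (((hasDerivAt_id t).const_mul (-γ)).exp.const_mul 2).const_add (-1)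
      have := HasDerivAt.prodMk (hasDerivAt_const t (0:ℝ)) h2
      convert this using 1
      simp only [velA, hcdef, Real.cos_neg, Real.cos_pi_div_two, Real.sin_neg,
        Real.sin_pi_div_two, Prod.mk.injEq]
      have : Real.cos (2 * -(Real.pi/2)) = -1 := by
        rw [show (2:ℝ) * -(Real.pi/2) = -Real.pi by ring, Real.cos_neg, Real.cos_pi]
      rw [this]
      constructor <;> ring
    have hcont : Continuous (velA ω γ (fun _ => -(Real.pi/2)) c) := by
      unfold velA
      fun_prop
    have hmem : ∀ n : ℕ, c n ∈ reachA ω γ (0,1) := fun n =>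
      mem_reach_of_deriv ω γ _ c (by norm_num [hcdef]) hc hcont n (Nat.cast_nonneg n)
    have htend : Tendsto (fun n : ℕ => c n) atTop (nhds ((0:ℝ), (-1:ℝ))) := by
      have he : Tendsto (fun n : ℕ => Real.exp (-γ * n)) atTop (nhds 0) := by
        apply Real.tendsto_exp_atBot.comp
        apply Tendsto.const_mul_atTop_of_neg (by linarith : -γ < 0)
        exact tendsto_natCast_atTop_atTop
      have : Tendsto (fun n : ℕ => -1 + 2 * Real.exp (-γ * n)) atTop (nhds (-1)) := by
        have := (he.const_mul 2).const_add (-1)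
        simpa using this
      exact tendsto_const_nhds.prodMk_nhds this
    exact mem_closure_of_tendsto htend (Eventually.of_forall hmem)
  · -- c t = (-(exp(-(γ/2) t) sin(ω t)), exp(-(γ/2) t) cos(ω t)), θ = 0
    set c : ℝ → ℝ × ℝ := fun t =>
      (-(Real.exp (-(γ/2) * t) * Real.sin (ω * t)),
        Real.exp (-(γ/2) * t) * Real.cos (ω * t)) with hcdef
    have he : ∀ t, HasDerivAt (fun t => Real.exp (-(γ/2) * t))
        (Real.exp (-(γ/2) * t) * (-(γ/2))) t := fun t => by
      simpa using ((hasDerivAt_id t).const_mul (-(γ/2))).exp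
    have hs : ∀ t, HasDerivAt (fun t => Real.sin (ω * t)) (Real.cos (ω * t) * ω) t :=
      fun t => by simpa using ((hasDerivAt_id t).const_mul ω).sin
    have hcos : ∀ t, HasDerivAt (fun t => Real.cos (ω * t)) (-Real.sin (ω * t) * ω) t :=
      fun t => by simpa using ((hasDerivAt_id t).const_mul ω).cos
    have hc : ∀ t, HasDerivAt c (velA ω γ (fun _ => (0:ℝ)) c t) t := by
      intro t
      have h1 := (((he t).mul (hs t)).neg)
      have h2 := ((he t).mul (hcos t))
      have := HasDerivAt.prodMk h1 h2
      convert this using 1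
      simp only [velA, hcdef, Real.cos_zero, Real.sin_zero, mul_zero, Prod.mk.injEq]
      constructor <;> ring
      simp only [velA, hcdef, Real.cos_zero, Real.sin_zero, mul_zero, Prod.mk.injEq]
      constructor <;> ring
    have hcont : Continuous (velA ω γ (fun _ => (0:ℝ)) c) := by
      unfold velA
      fun_prop
    have hmem : ∀ n : ℕ, c n ∈ reachA ω γ (0,1) := fun n =>
      mem_reach_of_deriv ω γ _ c (by norm_num [hcdef]) hc hcont n (Nat.cast_nonneg n)
    have htend : Tendsto (fun n : ℕ => c n) atTop (nhds ((0:ℝ), (0:ℝ))) := by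
      have heN : Tendsto (fun n : ℕ => Real.exp (-(γ/2) * n)) atTop (nhds 0) := by
        apply Real.tendsto_exp_atBot.comp
        apply Tendsto.const_mul_atTop_of_neg (by linarith : -(γ/2) < 0)
        exact tendsto_natCast_atTop_atTop
      have h1 : Tendsto (fun n : ℕ => -(Real.exp (-(γ/2) * n) * Real.sin (ω * n)))
          atTop (nhds 0) := by
        refine squeeze_zero_norm (fun n => ?_) heN
        rw [norm_neg, norm_mul]
        calc ‖Real.exp (-(γ/2) * n)‖ * ‖Real.sin (ω * n)‖
            ≤ ‖Real.exp (-(γ/2) * n)‖ * 1 := by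
              gcongr; exact Real.abs_sin_le_one _
          _ = Real.exp (-(γ/2) * n) := by rw [mul_one, Real.norm_eq_abs, abs_of_pos (Real.exp_pos _)]
      have h2 : Tendsto (fun n : ℕ => Real.exp (-(γ/2) * n) * Real.cos (ω * n))
          atTop (nhds 0) := by
        refine squeeze_zero_norm (fun n => ?_) heN
        rw [norm_mul]
        calc ‖Real.exp (-(γ/2) * n)‖ * ‖Real.cos (ω * n)‖
            ≤ ‖Real.exp (-(γ/2) * n)‖ * 1 := by
              gcongr; exact Real.abs_cos_le_one _
          _ = Real.exp (-(γ/2) * n) := by rw [mul_one, Real.norm_eq_abs, abs_of_pos (Real.exp_pos _)]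
      exact h1.prodMk_nhds h2
    exact mem_closure_of_tendsto htend (Eventually.of_forall hmem)
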